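/- arXiv:0806.3468 — 2 statements merged into one kernel-verified Lean document; each statement's English description precedes it below -/
import Mathlib

section
/- Let (f_n(x)) be of binomial type with f₀ = 1 and set x_n := (d/dx) f_n(x) |_{x=0}. Then for every n ≥ 1, f_n(x) = ∑_{k=1}^n B_{n,k}(x₁, x₂, ...) x^k. -/
open Finset

/-- The exponential partial Bell polynomial `B_{n,k}(x₁,x₂,…)`, defined via the
generating function `∑_{n} B_{n,k} tⁿ/n! = (1/k!) (∑_{m≥1} x_m t^m/m!)^k`. -/
noncomputable def bellB (n k : ℕ) (x : ℕ → ℝ) : ℝ :=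
  ((Nat.factorial n : ℝ) / (Nat.factorial k : ℝ)) *
    PowerSeries.coeff (R := ℝ) n
      ((PowerSeries.mk fun m => if m = 0 then 0 else x m / (Nat.factorial m : ℝ)) ^ k)

/-- The complete Bell polynomial `A_n(x₁,…,x_n) = ∑_{k=1}^n B_{n,k}`, `A₀ = 1`. -/
noncomputable def bellA (n : ℕ) (x : ℕ → ℝ) : ℝ :=
  if n = 0 then 1 else ∑ k ∈ Finset.Icc 1 n, bellB n k x

open Polynomial

lemma eval0 (f : ℕ → Polynomial ℝ) (hf0 : f 0 = 1)
    (hbin : ∀ n : ℕ, ∀ x y : ℝ, (f n).eval (x + y) =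
      ∑ j ∈ Finset.range (n + 1), (n.choose j : ℝ) * (f j).eval x * (f (n - j)).eval y) :
    ∀ n, (f n).eval 0 = if n = 0 then 1 else 0 := by
  intro n
  induction n using Nat.strong_induction_on with
  | _ n ih =>
    rcases Nat.eq_zero_or_pos n with h0 | h0
    · simp [h0, hf0]
    have h := hbin n 0 0
    rw [add_zero] at h
    have hsplit : ∑ j ∈ Finset.range (n + 1), (n.choose j : ℝ) * (f j).eval 0 * (f (n - j)).eval 0
        = 2 * (f n).eval 0 := by
      rw [Finset.sum_range_succ]
      have h1 : ∀ j ∈ Finset.range n, (n.choose j : ℝ) * (f j).eval 0 * (f (n - j)).eval 0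
          = if j = 0 then (f n).eval 0 else 0 := by
        intro j hj
        rw [Finset.mem_range] at hj
        rcases Nat.eq_zero_or_pos j with hj0 | hj0
        · simp [hj0, hf0]
        · have : (f (n - j)).eval 0 = 0 := by
            rw [ih (n - j) (by omega)]; simp; omega
          rw [this, mul_zero, if_neg (by omega)]
      rw [Finset.sum_congr rfl h1, Finset.sum_ite_eq' (Finset.range n) 0]
      simp [Finset.mem_range, h0, hf0]
      ring
    rw [hsplit] at h
    simp [if_neg (by omega : ¬ n = 0)]
    linarith

lemma star (f : ℕ → Polynomial ℝ)
    (hbin : ∀ n : ℕ, ∀ x y : ℝ, (f n).eval (x + y) =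
      ∑ j ∈ Finset.range (n + 1), (n.choose j : ℝ) * (f j).eval x * (f (n - j)).eval y)
    (n k l : ℕ) :
    ((k + l).choose l : ℝ) * (f n).coeff (k + l)
      = ∑ j ∈ Finset.range (n + 1), (n.choose j : ℝ) * (f j).coeff k * (f (n - j)).coeff l := by
  have stepA : ∀ x : ℝ, taylor x (f n)
      = ∑ j ∈ Finset.range (n + 1), ((n.choose j : ℝ) * (f j).eval x) • f (n - j) := by
    intro x
    apply Polynomial.funext
    intro y
    rw [taylor_apply, eval_comp]
    simp only [eval_add, eval_X, eval_C, eval_finset_sum, eval_smul, smul_eq_mul]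
    rw [add_comm y x, hbin n x y]
  have stepB : hasseDeriv l (f n)
      = ∑ j ∈ Finset.range (n + 1), ((n.choose j : ℝ) * (f (n - j)).coeff l) • f j := by
    apply Polynomial.funext
    intro x
    rw [← taylor_coeff x (f n) l, stepA x]
    rw [Polynomial.finset_sum_coeff]
    simp only [Polynomial.coeff_smul, smul_eq_mul, eval_finset_sum, eval_smul, smul_eq_mul]
    apply Finset.sum_congr rfl
    intro j hj
    ring
  have := congrArg (fun p => Polynomial.coeff p k) stepB
  simp only [hasseDeriv_coeff, Polynomial.finset_sum_coeff, Polynomial.coeff_smul,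
    smul_eq_mul] at this
  rw [this]
  apply Finset.sum_congr rfl
  intro j hj
  ring

lemma key (f : ℕ → Polynomial ℝ) (hf0 : f 0 = 1)
    (hbin : ∀ n : ℕ, ∀ x y : ℝ, (f n).eval (x + y) =
      ∑ j ∈ Finset.range (n + 1), (n.choose j : ℝ) * (f j).eval x * (f (n - j)).eval y) :
    ∀ k n, PowerSeries.coeff (R := ℝ) n
        ((PowerSeries.mk fun m => if m = 0 then 0
            else (Polynomial.derivative (f m)).eval 0 / (Nat.factorial m : ℝ)) ^ k)
      = (Nat.factorial k : ℝ) * (f n).coeff k / (Nat.factorial n : ℝ) := by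
  have hx : ∀ m : ℕ, (if m = 0 then 0
      else (Polynomial.derivative (f m)).eval 0 / (Nat.factorial m : ℝ))
      = (f m).coeff 1 / (Nat.factorial m : ℝ) := by
    intro m
    rcases Nat.eq_zero_or_pos m with h | h
    · subst h; simp [hf0, Polynomial.coeff_one]
    · rw [if_neg (by omega)]
      congr 1
      rw [← Polynomial.coeff_zero_eq_eval_zero, Polynomial.coeff_derivative]
      simp
  have hser : (PowerSeries.mk fun m => if m = 0 then 0
      else (Polynomial.derivative (f m)).eval 0 / (Nat.factorial m : ℝ))
      = PowerSeries.mk fun m => (f m).coeff 1 / (Nat.factorial m : ℝ) := by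
    ext m
    simp only [PowerSeries.coeff_mk, hx]
  rw [hser]
  intro k
  induction k with
  | zero =>
    intro n
    rcases Nat.eq_zero_or_pos n with h | h
    · subst h; simp [hf0]
    · rw [pow_zero, PowerSeries.coeff_one, if_neg (by omega)]
      have : (f n).coeff 0 = 0 := by
        rw [Polynomial.coeff_zero_eq_eval_zero, eval0 f hf0 hbin n, if_neg (by omega)]
      rw [this]
      simp
  | succ k ih =>
    intro n
    rw [pow_succ, PowerSeries.coeff_mul, Finset.Nat.sum_antidiagonal_eq_sum_range_succ_mk]
    simp only [PowerSeries.coeff_mk, ih]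
    have hstar := star f hbin n k 1
    rw [Nat.choose_one_right] at hstar
    have hfac : ∀ m : ℕ, ((Nat.factorial m : ℝ)) ≠ 0 :=
      fun m => Nat.cast_ne_zero.mpr (Nat.factorial_ne_zero m)
    calc ∑ j ∈ Finset.range (n + 1),
          (Nat.factorial k : ℝ) * (f j).coeff k / (Nat.factorial j : ℝ) *
            ((f (n - j)).coeff 1 / (Nat.factorial (n - j) : ℝ))
        = ((Nat.factorial k : ℝ) / (Nat.factorial n : ℝ)) *
            ∑ j ∈ Finset.range (n + 1),
              (n.choose j : ℝ) * (f j).coeff k * (f (n - j)).coeff 1 := by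
          rw [Finset.mul_sum]
          apply Finset.sum_congr rfl
          intro j hj
          rw [Finset.mem_range] at hj
          rw [Nat.cast_choose ℝ (by omega : j ≤ n)]
          field_simp
      _ = (Nat.factorial (k + 1) : ℝ) * (f n).coeff (k + 1) / (Nat.factorial n : ℝ) := by
          rw [← hstar, Nat.factorial_succ]
          push_cast
          ring

theorem stmt_8 (f : ℕ → Polynomial ℝ) (hf0 : f 0 = 1) (hdeg : ∀ n, (f n).natDegree = n)
    (hbin : ∀ n : ℕ, ∀ x y : ℝ, (f n).eval (x + y) =
      ∑ j ∈ Finset.range (n + 1), (n.choose j : ℝ) * (f j).eval x * (f (n - j)).eval y)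
    (n : ℕ) (hn : 1 ≤ n) (x : ℝ) :
    (f n).eval x =
      ∑ k ∈ Finset.Icc 1 n,
        bellB n k (fun m => (Polynomial.derivative (f m)).eval 0) * x ^ k := by
  have hfac : ∀ m : ℕ, ((Nat.factorial m : ℝ)) ≠ 0 :=
    fun m => Nat.cast_ne_zero.mpr (Nat.factorial_ne_zero m)
  have hbell : ∀ k : ℕ, bellB n k (fun m => (Polynomial.derivative (f m)).eval 0)
      = (f n).coeff k := by
    intro k
    rw [bellB, key f hf0 hbin k n]
    field_simp
  have h0 : (f n).coeff 0 = 0 := by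
    rw [Polynomial.coeff_zero_eq_eval_zero, eval0 f hf0 hbin n, if_neg (by omega)]
  rw [Polynomial.eval_eq_sum_range, hdeg n, Finset.sum_range_succ']
  rw [h0]
  simp only [pow_zero, zero_mul, add_zero]
  rw [← Finset.Ico_add_one_right_eq_Icc, Finset.sum_Ico_eq_sum_range]
  simp only [Nat.succ_sub_one, hbell]
  apply Finset.sum_congr rfl
  intro i _
  rw [add_comm 1 i]
end

section
/- Let a₀, a₁, a₂, ... be real numbers and define the Appell polynomial A_n(z) := ∑_{j=0}^n C(n,j) a_j z^{n-j}. Then for all natural numbers n ≥ k ≥ 1 and real z, B_{n,k}(A₀(z), 2A₁(z), ..., m·A_{m-1}(z), ...) = ∑_{j=k}^n C(n,j) B_{j,k}(a₀, 2a₁, 3a₂, ..., m·a_{m-1}, ...) (kz)^{n-j}. -/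
open Finset

/-- The Appell polynomial `A_n(z) = ∑_{j=0}^n C(n,j) a_j z^{n-j}`. -/
noncomputable def appell (a : ℕ → ℝ) (n : ℕ) (z : ℝ) : ℝ :=
  ∑ j ∈ Finset.range (n + 1), (n.choose j : ℝ) * a j * z ^ (n - j)

open PowerSeries in
theorem stmt_9_aux (a : ℕ → ℝ) (n k : ℕ) (hk : 1 ≤ k) (hkn : k ≤ n) (z : ℝ) :
    bellB n k (fun m => (m : ℝ) * appell a (m - 1) z) =
      ∑ j ∈ Finset.Icc k n,
        (n.choose j : ℝ) * bellB j k (fun m => (m : ℝ) * a (m - 1)) *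
          ((k : ℝ) * z) ^ (n - j) := by
  set G : ℝ⟦X⟧ := PowerSeries.mk fun m =>
      if m = 0 then 0 else ((m : ℝ) * a (m - 1)) / (Nat.factorial m : ℝ) with hGdef
  have hF : (PowerSeries.mk fun m =>
        if m = 0 then 0 else ((m : ℝ) * appell a (m - 1) z) / (Nat.factorial m : ℝ))
      = G * PowerSeries.rescale z (PowerSeries.exp ℝ) := by
    ext m
    rw [coeff_mul, Finset.Nat.sum_antidiagonal_eq_sum_range_succ_mk]
    rcases m with _ | s
    · simp [hGdef]
    · simp only [coeff_mk, hGdef, coeff_rescale, coeff_exp]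
      rw [Finset.sum_range_succ']
      simp only [Nat.succ_ne_zero, if_false, reduceIte, Nat.add_sub_cancel, zero_mul, add_zero,
        map_div₀, map_one, map_natCast]
      have happ : appell a s z = ∑ j ∈ Finset.range (s + 1),
          (s.choose j : ℝ) * a j * z ^ (s - j) := rfl
      rw [happ, Finset.mul_sum, Finset.sum_div]
      refine Finset.sum_congr rfl fun j hj => ?_
      rw [Finset.mem_range] at hj
      have hjs : j ≤ s := Nat.lt_succ_iff.mp hj
      have h1 : (Nat.succ s : ℝ) ≠ 0 := by positivity
      have hc : ((s.choose j : ℕ) : ℝ) = (Nat.factorial s : ℝ) /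
          ((Nat.factorial j : ℝ) * (Nat.factorial (s - j) : ℝ)) := Nat.cast_choose ℝ hjs
      have e1 : s + 1 - (j + 1) = s - j := by omega
      rw [e1]
      -- removed
      push_cast
      rw [hc]
      have hf1 : (Nat.factorial j : ℝ) ≠ 0 := by positivity
      have hf2 : (Nat.factorial (s - j) : ℝ) ≠ 0 := by positivity
      have hf3 : (Nat.factorial (s + 1) : ℝ) ≠ 0 := by positivity
      have hf4 : (Nat.factorial (j + 1) : ℝ) ≠ 0 := by positivity
      have hj1 : (Nat.factorial (j + 1) : ℝ) = (j + 1) * Nat.factorial j := by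
        push_cast [Nat.factorial_succ]; ring
      have hs1 : (Nat.factorial (s + 1) : ℝ) = (s + 1) * Nat.factorial s := by
        push_cast [Nat.factorial_succ]; ring
      rw [hj1, hs1]
      field_simp
  have hpow : (PowerSeries.mk fun m =>
        if m = 0 then 0 else ((m : ℝ) * appell a (m - 1) z) / (Nat.factorial m : ℝ)) ^ k
      = G ^ k * PowerSeries.rescale ((k : ℝ) * z) (PowerSeries.exp ℝ) := by
    rw [hF, mul_pow, ← map_pow, exp_pow_eq_rescale_exp, rescale_rescale]
  -- vanishing of low coefficients of G ^ k
  have hvan : ∀ q < k, (coeff (R := ℝ) q) (G ^ k) = 0 := by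
    have hX : (X : ℝ⟦X⟧) ∣ G := X_dvd_iff.mpr (by simp [hGdef, constantCoeff_mk])
    obtain ⟨h, hh⟩ := pow_dvd_pow_of_dvd hX k
    intro q hq
    rw [hh, mul_comm, coeff_mul_X_pow', if_neg (by omega)]
  unfold bellB
  rw [hpow, coeff_mul, Finset.Nat.sum_antidiagonal_eq_sum_range_succ_mk, Finset.mul_sum]
  rw [← Finset.sum_subset (by intro x hx; rw [Finset.mem_Icc] at hx; rw [Finset.mem_range]; omega : Finset.Icc k n ⊆ Finset.range (n+1)) ?van]
  case van =>
    intro q hq hq2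
    rw [Finset.mem_range] at hq
    rw [Finset.mem_Icc] at hq2
    have : q < k := by omega
    rw [hvan q this]
    ring
  refine Finset.sum_congr rfl fun j hj => ?_
  rw [Finset.mem_Icc] at hj
  simp only [coeff_rescale, coeff_exp, map_div₀, map_one, map_natCast]
  have hc : ((n.choose j : ℕ) : ℝ) = (Nat.factorial n : ℝ) /
      ((Nat.factorial j : ℝ) * (Nat.factorial (n - j) : ℝ)) := Nat.cast_choose ℝ hj.2
  push_cast
  rw [hc]
  have hf1 : (Nat.factorial j : ℝ) ≠ 0 := by positivity
  have hf2 : (Nat.factorial (n - j) : ℝ) ≠ 0 := by positivity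
  have hf3 : (Nat.factorial n : ℝ) ≠ 0 := by positivity
  have hf4 : (Nat.factorial k : ℝ) ≠ 0 := by positivity
  field_simp
  ring


theorem stmt_9 (a : ℕ → ℝ) (n k : ℕ) (hk : 1 ≤ k) (hkn : k ≤ n) (z : ℝ) :
    bellB n k (fun m => (m : ℝ) * appell a (m - 1) z) =
      ∑ j ∈ Finset.Icc k n,
        (n.choose j : ℝ) * bellB j k (fun m => (m : ℝ) * a (m - 1)) *
          ((k : ℝ) * z) ^ (n - j) := by
  exact stmt_9_aux a n k hk hkn z
end
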